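/- The r-Whitney numbers of the second kind are special values of the partial r-Bell polynomials: W_{m,r}(n,k) = B^{(r)}_{n+r,k+r}(m^{l-1} ; 1), i.e., taking a_l = m^{l-1} and b_l = 1 for all l ≥ 1. Equivalently, as formal power series, (1/k!)((e^{mt}-1)/m)^k e^{rt} = Σ_{n≥k} B^{(r)}_{n+r,k+r}(m^{l-1};1) t^n/n!. -/

import Mathlib

open Finset

/-- The partial `r`-Bell polynomial `B^{(r)}_{n+r,k+r}(a;b)`, defined by the explicit
formula `(n!/k!) * Σ_{n_1+...+n_{k+r}=n-k} Π_{i=1}^{r} b_{n_i+1}/n_i! *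
Π_{i=r+1}^{r+k} a_{n_i+1}/(n_i+1)!`, the sum over `(k+r)`-tuples of naturals. -/
noncomputable def rBell {A : Type*} [CommRing A] [Algebra ℚ A]
    (r k n : ℕ) (a b : ℕ → A) : A :=
  ((n.factorial : ℚ) / (k.factorial : ℚ)) •
    ∑ f ∈ Finset.Nat.antidiagonalTuple (k + r) (n - k),
      ∏ i : Fin (k + r),
        if (i : ℕ) < r then (((f i).factorial : ℚ))⁻¹ • b (f i + 1)
        else ((((f i) + 1).factorial : ℚ))⁻¹ • a (f i + 1)

open PowerSeries

/-- The `r`-Whitney numbers of the second kind as partial `r`-Bell polynomials: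
`(1/k!)((e^{mt}-1)/m)^k e^{rt} = Σ_{n≥k} B^{(r)}_{n+r,k+r}(m^{l-1};1) t^n/n!`. -/
theorem rWhitneySecond_eq_rBell (m : ℕ) (hm : 0 < m) (r k : ℕ) :
    ((k.factorial : ℚ))⁻¹ •
        (((m : ℚ)⁻¹ • ((PowerSeries.exp ℚ) ^ m - 1)) ^ k * (PowerSeries.exp ℚ) ^ r) =
      PowerSeries.mk fun n => if k ≤ n then
        ((n.factorial : ℚ))⁻¹ *
          rBell r k n (fun l => (m : ℚ) ^ (l - 1)) (fun _ => (1 : ℚ)) else 0 := by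
  have hm' : (m:ℚ) ≠ 0 := Nat.cast_ne_zero.mpr hm.ne'
  set p : PowerSeries ℚ := (m:ℚ)⁻¹ • (exp ℚ ^ m - 1) with hp
  have hcp : ∀ n, coeff n p = if n = 0 then 0 else (m:ℚ)^(n-1) / n.factorial := by
    intro n
    rw [hp, map_smul, map_sub, exp_pow_eq_rescale_exp, coeff_rescale, coeff_exp, coeff_one]
    cases n with
    | zero => simp
    | succ n =>
      simp only [Nat.succ_ne_zero, if_false, sub_zero, Nat.add_sub_cancel, smul_eq_mul,
        Algebra.algebraMap_self, RingHom.id_apply]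
      rw [eq_comm, div_eq_iff (by exact_mod_cast (Nat.factorial_pos _).ne')]
      field_simp
      ring
  -- the tuple of factors
  set q : Fin (k + r) → PowerSeries ℚ := fun i => if (i:ℕ) < r then exp ℚ else p with hq
  have hprod : p ^ k * exp ℚ ^ r = ∏ i : Fin (k + r), q i := by
    rw [hq]
    rw [Finset.prod_ite, Finset.prod_const, Finset.prod_const]
    have h1 : (univ.filter (fun i : Fin (k+r) => (i:ℕ) < r)).card = r := by
      rw [Finset.card_filter]
      rw [Fin.sum_univ_eq_sum_range (fun i => if i < r then (1:ℕ) else 0)]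
      rw [← Finset.card_filter]
      rw [show (range (k+r)).filter (· < r) = range r by ext x; simp; omega]
      exact card_range r
    have h2 : (univ.filter (fun i : Fin (k+r) => ¬ (i:ℕ) < r)).card = k := by
      have := Finset.card_filter_add_card_filter_not
        (s := (univ : Finset (Fin (k+r)))) (p := fun i => (i:ℕ) < r)
      simp only [Finset.card_univ, Fintype.card_fin] at this
      omega
    rw [h1, h2, mul_comm]
  have hk : ∀ n : ℕ, ∑ j : Fin (k + r), (if (j:ℕ) < r then 0 else 1) = k := by
    intro n
    have h2 : (univ.filter (fun i : Fin (k+r) => ¬ (i:ℕ) < r)).card = k := by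
      have := Finset.card_filter_add_card_filter_not
        (s := (univ : Finset (Fin (k+r)))) (p := fun i => (i:ℕ) < r)
      have h1 : (univ.filter (fun i : Fin (k+r) => (i:ℕ) < r)).card = r := by
        rw [Finset.card_filter]
        rw [Fin.sum_univ_eq_sum_range (fun i => if i < r then (1:ℕ) else 0)]
        rw [← Finset.card_filter]
        rw [show (range (k+r)).filter (· < r) = range r by ext x; simp; omega]
        exact card_range r
      simp only [Finset.card_univ, Fintype.card_fin] at this
      omega
    calc ∑ j : Fin (k + r), (if (j:ℕ) < r then 0 else 1)
        = ∑ j ∈ univ.filter (fun i : Fin (k+r) => ¬ (i:ℕ) < r), 1 := by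
          rw [Finset.sum_filter]
          congr 1; ext j; split <;> simp_all
      _ = k := by rw [Finset.sum_const, h2, smul_eq_mul, mul_one]
  -- key coefficient identity
  have key : ∀ n : ℕ, coeff n (p ^ k * exp ℚ ^ r) =
      if k ≤ n then
        ∑ g ∈ Finset.Nat.antidiagonalTuple (k + r) (n - k),
          ∏ i : Fin (k + r),
            (if (i:ℕ) < r then ((g i).factorial : ℚ)⁻¹ • (1:ℚ)
             else (((g i) + 1).factorial : ℚ)⁻¹ • ((m:ℚ) ^ ((g i + 1) - 1)))
      else 0 := by
    intro n
    rw [hprod, PowerSeries.coeff_prod]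
    -- restrict to the support condition
    rw [← Finset.sum_filter_of_ne (p := fun l : Fin (k+r) →₀ ℕ =>
        ∀ i : Fin (k+r), r ≤ (i:ℕ) → l i ≠ 0)
      (by
        intro l hl hF i hi hli
        apply hF
        apply Finset.prod_eq_zero (Finset.mem_univ i)
        simp only [hq]
        rw [if_neg (by omega : ¬ (i:ℕ) < r), hcp, if_pos hli])]
    by_cases hkn : k ≤ n
    · rw [if_pos hkn]
      apply Finset.sum_nbij'
        (i := fun l (j : Fin (k+r)) => if (j:ℕ) < r then l j else l j - 1)
        (j := fun g => Finsupp.equivFunOnFinite.symm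
          (fun j : Fin (k+r) => if (j:ℕ) < r then g j else g j + 1))
      · intro l hl
        simp only [Finset.mem_filter, Finset.mem_finsuppAntidiag] at hl
        obtain ⟨⟨hsum, -⟩, hpos⟩ := hl
        rw [Finset.Nat.mem_antidiagonalTuple]
        have hstep : ∀ j : Fin (k+r),
            (if (j:ℕ) < r then l j else l j - 1) + (if (j:ℕ) < r then 0 else 1) = l j := by
          intro j
          split
          · omega
          · have := hpos j (by omega)
            omega
        have : ∑ j : Fin (k+r), ((if (j:ℕ) < r then l j else l j - 1)
            + (if (j:ℕ) < r then 0 else 1)) = n := by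
          simp_rw [hstep]
          simpa using hsum
        rw [Finset.sum_add_distrib, hk n] at this
        omega
      · intro g hg
        rw [Finset.Nat.mem_antidiagonalTuple] at hg
        simp only [Finset.mem_filter, Finset.mem_finsuppAntidiag]
        refine ⟨⟨?_, Finset.subset_univ _⟩, ?_⟩
        · have : ∑ j : Fin (k+r), (if (j:ℕ) < r then g j else g j + 1)
              = ∑ j : Fin (k+r), (g j + (if (j:ℕ) < r then 0 else 1)) := by
            congr 1; ext j; split <;> omega
          calc ∑ j ∈ univ, (Finsupp.equivFunOnFinite.symm
                (fun j : Fin (k+r) => if (j:ℕ) < r then g j else g j + 1)) j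
              = ∑ j : Fin (k+r), (if (j:ℕ) < r then g j else g j + 1) := by
                apply Finset.sum_congr rfl
                intro j _
                rw [Finsupp.equivFunOnFinite_symm_apply_apply]
            _ = n := by
                rw [this, Finset.sum_add_distrib, hk n, hg]
                omega
        · intro i hi
          rw [Finsupp.equivFunOnFinite_symm_apply_apply, if_neg (by omega : ¬ (i:ℕ) < r)]
          omega
      · intro l hl
        simp only [Finset.mem_filter, Finset.mem_finsuppAntidiag] at hl
        obtain ⟨-, hpos⟩ := hl
        ext j
        rw [Finsupp.equivFunOnFinite_symm_apply_apply]
        by_cases hjr : (j:ℕ) < r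
        · simp [hjr]
        · have := hpos j (by omega)
          simp only [if_neg hjr]
          omega
      · intro g hg
        funext j
        rw [Finsupp.equivFunOnFinite_symm_apply_apply]
        by_cases hjr : (j:ℕ) < r <;> simp [hjr]
      · intro l hl
        simp only [Finset.mem_filter, Finset.mem_finsuppAntidiag] at hl
        obtain ⟨-, hpos⟩ := hl
        apply Finset.prod_congr rfl
        intro i _
        rw [hq]
        by_cases hir : (i:ℕ) < r
        · simp only [if_pos hir, PowerSeries.coeff_exp, smul_eq_mul, mul_one,
            Algebra.algebraMap_self, RingHom.id_apply]
          rw [one_div]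
        · have hli := hpos i (by omega)
          simp only [if_neg hir]
          rw [hcp, if_neg hli]
          have h1 : l i - 1 + 1 = l i := by omega
          rw [h1]
          simp only [smul_eq_mul]
          rw [div_eq_inv_mul]
    · rw [if_neg hkn]
      apply Finset.sum_eq_zero
      intro l hl
      exfalso
      simp only [Finset.mem_filter, Finset.mem_finsuppAntidiag] at hl
      obtain ⟨⟨hsum, -⟩, hpos⟩ := hl
      have : k ≤ ∑ j ∈ univ, l j := by
        calc k = ∑ j : Fin (k+r), (if (j:ℕ) < r then 0 else 1) := (hk n).symm
          _ ≤ ∑ j : Fin (k+r), l j := by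
              apply Finset.sum_le_sum
              intro j _
              split
              · omega
              · have := hpos j (by omega)
                omega
      exact hkn (le_of_le_of_eq this hsum)
  -- conclude
  ext n
  rw [map_smul, PowerSeries.coeff_mk, key n]
  by_cases hkn : k ≤ n
  · rw [if_pos hkn, if_pos hkn]
    rw [rBell]
    rw [smul_eq_mul, smul_eq_mul]
    have hn : ((n.factorial : ℚ)) ≠ 0 := by exact_mod_cast (Nat.factorial_pos n).ne'
    rw [← mul_assoc]
    congr 1
    field_simp
  · rw [if_neg hkn, if_neg hkn, smul_zero]
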